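/- arXiv:2508.09498 — 8 statements merged into one kernel-verified Lean document; each statement's English description precedes it below -/
import Mathlib

section
/- Let m ≥ 1 and let h be the restriction to the unit sphere S^m = {x ∈ ℝ^{m+1} : ‖x‖ = 1} (with its standard smooth manifold structure) of the first coordinate function x ↦ x_1. Then the manifold derivative (mfderiv) of h at a point x ∈ S^m is the zero linear map if and only if x = e_1 or x = -e_1, where e_1 denotes the first standard basis vector of ℝ^{m+1}. In particular, the natural height function of the unit sphere has exactly two singular points. -/
open Metric Module Manifold

/-- The natural height function (restriction of the first coordinate) on the unit
sphere `S^m ⊆ ℝ^{m+1}` has exactly two singular points: its manifold derivative at a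
point `x` of the sphere vanishes if and only if `x = e₁` or `x = -e₁`. -/
theorem height_singular_points_iff (m : ℕ) (hm : 1 ≤ m)
    [Fact (finrank ℝ (EuclideanSpace ℝ (Fin (m + 1))) = m + 1)]
    (x : sphere (0 : EuclideanSpace ℝ (Fin (m + 1))) 1) :
    mfderiv (𝓡 m) 𝓘(ℝ, ℝ)
        (fun y : sphere (0 : EuclideanSpace ℝ (Fin (m + 1))) 1 =>
          (y : EuclideanSpace ℝ (Fin (m + 1))) 0) x = 0 ↔
      (x : EuclideanSpace ℝ (Fin (m + 1))) = EuclideanSpace.single 0 (1 : ℝ) ∨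
      (x : EuclideanSpace ℝ (Fin (m + 1))) = -EuclideanSpace.single 0 (1 : ℝ) := by
  set E := EuclideanSpace ℝ (Fin (m + 1))
  set e₁ : E := EuclideanSpace.single 0 (1 : ℝ)
  set D := mfderiv (𝓡 m) 𝓘(ℝ, E) ((↑) : sphere (0 : E) 1 → E) x with hD
  have hx1 : ‖(x : E)‖ = 1 := norm_eq_of_mem_sphere x
  have he1 : ‖e₁‖ = 1 := by
    show ‖EuclideanSpace.single (0 : Fin (m + 1)) (1 : ℝ)‖ = 1
    rw [EuclideanSpace.norm_single]; norm_num
  -- Step 1: factor the derivative through the inclusion.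
  have key : mfderiv (𝓡 m) 𝓘(ℝ, ℝ)
      (fun y : sphere (0 : E) 1 => (y : E) 0) x
      = (EuclideanSpace.proj (0 : Fin (m + 1)) : E →L[ℝ] ℝ).comp D := by
    have h1 : MDifferentiableAt 𝓘(ℝ, E) 𝓘(ℝ, ℝ)
        (EuclideanSpace.proj (0 : Fin (m + 1)) : E →L[ℝ] ℝ) ((x : E)) :=
      (EuclideanSpace.proj (0 : Fin (m + 1)) : E →L[ℝ] ℝ).contDiff.contMDiff.mdifferentiableAt
        one_ne_zero
    have h2 : MDifferentiableAt (𝓡 m) 𝓘(ℝ, E) ((↑) : sphere (0 : E) 1 → E) x :=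
      (contMDiff_coe_sphere x).mdifferentiableAt one_ne_zero
    have := mfderiv_comp x h1 h2
    rw [(EuclideanSpace.proj (0 : Fin (m + 1)) : E →L[ℝ] ℝ).mfderiv_eq] at this
    exact this
  rw [key]
  -- Step 2: the composition vanishes iff e₁ ⟂ range D = (ℝ ∙ x)ᗮ, i.e. e₁ ∈ ℝ ∙ x.
  have hrange := range_mfderiv_coe_sphere (n := m) x
  have step2 : (EuclideanSpace.proj (0 : Fin (m + 1)) : E →L[ℝ] ℝ).comp D = 0 ↔
      e₁ ∈ (ℝ ∙ (x : E)) := by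
    constructor
    · intro h
      rw [← Submodule.orthogonal_orthogonal (ℝ ∙ (x : E))]
      intro v hv
      rw [← hrange] at hv
      obtain ⟨w, rfl⟩ := hv
      have := congrArg (fun L => ContinuousLinearMap.toLinearMap L w) h
      simp only [ContinuousLinearMap.coe_comp, LinearMap.coe_comp, Function.comp_apply,
        ContinuousLinearMap.coe_zero, LinearMap.zero_apply] at this
      have hproj : (show E from D w) 0 = 0 := this
      have hh : inner ℝ e₁ (show E from D w) = 0 := by
        exact (EuclideanSpace.inner_single_left (0 : Fin (m + 1)) (1 : ℝ) (show E from D w)).trans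
          (by simp [hproj])
      exact (real_inner_comm _ _).trans hh
    · intro h
      ext w
      have hmem : D w ∈ (ℝ ∙ (x : E))ᗮ := by
        rw [← hrange]; exact ⟨w, rfl⟩
      have := hmem e₁ h
      have h' : inner ℝ e₁ (show E from D w) = 0 := this
      have h3 := (EuclideanSpace.inner_single_left (0 : Fin (m + 1)) (1 : ℝ)
        (show E from D w)).symm.trans h'
      simp at h3
      exact h3
  refine step2.trans ?_
  -- Step 3: e₁ ∈ ℝ ∙ x ↔ x = ± e₁ (both are unit vectors).
  rw [Submodule.mem_span_singleton]
  constructor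
  · rintro ⟨c, hc⟩
    have hc1 : |c| = 1 := by
      have : ‖c • (x : E)‖ = 1 := by rw [hc]; exact he1
      rwa [norm_smul, hx1, mul_one, Real.norm_eq_abs] at this
    rcases abs_eq (by norm_num : (0:ℝ) ≤ 1) |>.mp hc1 with h1 | h1
    · left; rw [h1, one_smul] at hc; exact hc
    · right; rw [h1, neg_one_smul] at hc
      rw [← hc, neg_neg]
  · rintro (h | h)
    · exact ⟨1, by rw [one_smul, h]⟩
    · exact ⟨-1, by rw [neg_one_smul, h, neg_neg]⟩
end

section
/- Let m ≥ 2 and let S^m ⊂ ℝ^{m+1} be the unit sphere with height function h(x) = x_1. Define an equivalence relation on S^m by declaring x ~ y if and only if y belongs to the connected component containing x of the level set {z ∈ S^m : z_1 = x_1}. Then the map induced by h from the quotient topological space S^m/~ to the closed interval [-1, 1] is a homeomorphism. (In other words, the Reeb graph of the natural height function of the unit sphere of dimension at least 2 is homeomorphic to a closed interval.) -/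
open Metric

lemma aux_norm_sq (m : ℕ) (c : ℝ) (w : EuclideanSpace ℝ (Fin (m + 1))) (hw : w 0 = 0) :
    ‖c • EuclideanSpace.single (0 : Fin (m + 1)) (1 : ℝ) + w‖ ^ 2 = c ^ 2 + ‖w‖ ^ 2 := by
  have h1 : inner ℝ (c • EuclideanSpace.single (0 : Fin (m + 1)) (1 : ℝ)) w = (0 : ℝ) := by
    rw [real_inner_smul_left, EuclideanSpace.inner_single_left]
    simp [hw]
  have h2 : ‖c • EuclideanSpace.single (0 : Fin (m + 1)) (1 : ℝ)‖ = |c| := by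
    rw [norm_smul, EuclideanSpace.norm_single]
    simp
  rw [norm_add_sq_real, h1, h2, sq_abs]
  ring

lemma aux_finrank_ker (m : ℕ) :
    Module.finrank ℝ (LinearMap.ker ((EuclideanSpace.proj (0 : Fin (m + 1)) :
      EuclideanSpace ℝ (Fin (m + 1)) →L[ℝ] ℝ) : EuclideanSpace ℝ (Fin (m + 1)) →ₗ[ℝ] ℝ)) = m := by
  have hsurj : Function.Surjective (EuclideanSpace.proj (0 : Fin (m + 1)) :
      EuclideanSpace ℝ (Fin (m + 1)) →L[ℝ] ℝ) := fun a => ⟨EuclideanSpace.single 0 a, by simp⟩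
  have hker := LinearMap.finrank_range_add_finrank_ker
    ((EuclideanSpace.proj (0 : Fin (m + 1)) : EuclideanSpace ℝ (Fin (m + 1)) →L[ℝ] ℝ) :
      EuclideanSpace ℝ (Fin (m + 1)) →ₗ[ℝ] ℝ)
  have htop : LinearMap.range ((EuclideanSpace.proj (0 : Fin (m + 1)) :
      EuclideanSpace ℝ (Fin (m + 1)) →L[ℝ] ℝ) : EuclideanSpace ℝ (Fin (m + 1)) →ₗ[ℝ] ℝ) = ⊤ :=
    LinearMap.range_eq_top.mpr hsurj
  rw [htop, finrank_top] at hker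
  have hkk : LinearMap.ker ((EuclideanSpace.proj (0 : Fin (m + 1)) :
      EuclideanSpace ℝ (Fin (m + 1)) →L[ℝ] ℝ) : EuclideanSpace ℝ (Fin (m + 1)) →ₗ[ℝ] ℝ) =
      LinearMap.ker ((EuclideanSpace.proj (0 : Fin (m + 1)) :
      EuclideanSpace ℝ (Fin (m + 1)) →L[ℝ] ℝ) : EuclideanSpace ℝ (Fin (m + 1)) →ₗ[ℝ] ℝ) := rfl
  rw [hkk] at hker
  simp [finrank_euclideanSpace] at hker
  omega

/-- The level set of the height function on the sphere is preconnected when `2 ≤ m`. -/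
lemma aux_level_preconnected (m : ℕ) (hm : 2 ≤ m) (c : ℝ) (hc : c ∈ Set.Icc (-1 : ℝ) 1) :
    IsPreconnected {z : sphere (0 : EuclideanSpace ℝ (Fin (m + 1))) 1 |
      (z : EuclideanSpace ℝ (Fin (m + 1))) 0 = c} := by
  have hc2 : c ^ 2 ≤ 1 := by nlinarith [hc.1, hc.2]
  set s : ℝ := Real.sqrt (1 - c ^ 2) with hsdef
  have hs0 : 0 ≤ s := Real.sqrt_nonneg _
  have hs2 : s ^ 2 = 1 - c ^ 2 := Real.sq_sqrt (by linarith)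
  set K : Submodule ℝ (EuclideanSpace ℝ (Fin (m + 1))) :=
    LinearMap.ker ((EuclideanSpace.proj (0 : Fin (m + 1)) :
      EuclideanSpace ℝ (Fin (m + 1)) →L[ℝ] ℝ) : EuclideanSpace ℝ (Fin (m + 1)) →ₗ[ℝ] ℝ) with hKdef
  have hrank : 1 < Module.rank ℝ K := by
    have h1 : (1 : Cardinal) < (Module.finrank ℝ K : Cardinal) := by
      rw [hKdef, aux_finrank_ker m]
      exact_mod_cast (by omega : 1 < m)
    rwa [Module.finrank_eq_rank] at h1
  have hconn : IsConnected (sphere (0 : K) s) := isConnected_sphere hrank 0 hs0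
  set g : K → EuclideanSpace ℝ (Fin (m + 1)) :=
    fun w => c • EuclideanSpace.single (0 : Fin (m + 1)) (1 : ℝ) + (w : EuclideanSpace ℝ (Fin (m + 1)))
    with hgdef
  have hg : Continuous g := continuous_const.add continuous_subtype_val
  have himg : g '' sphere (0 : K) s = {z : EuclideanSpace ℝ (Fin (m + 1)) | ‖z‖ = 1 ∧ z 0 = c} := by
    ext z
    constructor
    · rintro ⟨w, hw, rfl⟩
      have hw0 : (w : EuclideanSpace ℝ (Fin (m + 1))) 0 = 0 := w.2
      have hwn : ‖(w : EuclideanSpace ℝ (Fin (m + 1)))‖ = s := by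
        simpa using mem_sphere_zero_iff_norm.mp hw
      constructor
      · have h3 : ‖g w‖ ^ 2 = 1 := by
          rw [hgdef]
          simp only
          rw [aux_norm_sq m c _ hw0, hwn, hs2]; ring
        nlinarith [norm_nonneg (g w)]
      · show (c • EuclideanSpace.single (0 : Fin (m + 1)) (1 : ℝ) +
            (w : EuclideanSpace ℝ (Fin (m + 1)))) 0 = c
        simp [EuclideanSpace.single_apply, hw0, PiLp.add_apply, PiLp.smul_apply]
    · rintro ⟨hz1, hz0⟩
      have hw0 : (z - c • EuclideanSpace.single (0 : Fin (m + 1)) (1 : ℝ)) 0 = 0 := by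
        simp [EuclideanSpace.single_apply, hz0, PiLp.sub_apply, PiLp.smul_apply]
      have hsum : c • EuclideanSpace.single (0 : Fin (m + 1)) (1 : ℝ) +
          (z - c • EuclideanSpace.single (0 : Fin (m + 1)) (1 : ℝ)) = z := by abel
      refine ⟨⟨z - c • EuclideanSpace.single (0 : Fin (m + 1)) (1 : ℝ), ?_⟩, ?_, ?_⟩
      · rw [hKdef]
        simpa [LinearMap.mem_ker] using hw0
      · have hnw : ‖z - c • EuclideanSpace.single (0 : Fin (m + 1)) (1 : ℝ)‖ ^ 2 = 1 - c ^ 2 := by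
          have h4 := aux_norm_sq m c (z - c • EuclideanSpace.single (0 : Fin (m + 1)) (1 : ℝ)) hw0
          rw [hsum, hz1] at h4
          linarith
        have h5 : ‖z - c • EuclideanSpace.single (0 : Fin (m + 1)) (1 : ℝ)‖ = s := by
          rw [show ‖z - c • EuclideanSpace.single (0 : Fin (m + 1)) (1 : ℝ)‖ =
            Real.sqrt (‖z - c • EuclideanSpace.single (0 : Fin (m + 1)) (1 : ℝ)‖ ^ 2) from
            (Real.sqrt_sq (norm_nonneg _)).symm, hnw]
        simpa [mem_sphere_zero_iff_norm] using h5
      · exact hsum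
  have hL : IsPreconnected {z : EuclideanSpace ℝ (Fin (m + 1)) | ‖z‖ = 1 ∧ z 0 = c} := by
    rw [← himg]
    exact (hconn.image g hg.continuousOn).isPreconnected
  rw [← Topology.IsInducing.subtypeVal.isPreconnected_image]
  convert hL using 1
  ext z
  constructor
  · rintro ⟨⟨z', hz'⟩, hz0, rfl⟩
    exact ⟨by simpa using mem_sphere_zero_iff_norm.mp hz', hz0⟩
  · rintro ⟨hz1, hz0⟩
    exact ⟨⟨z, by simpa [mem_sphere_zero_iff_norm] using hz1⟩, hz0, rfl⟩

/-- The Reeb quotient of the height function on the unit sphere `S^m` (`m ≥ 2`):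
identify two points of the sphere when they lie in the same connected component of the
same level set of the first coordinate. The induced map to `[-1, 1]` is a
homeomorphism; i.e. the Reeb graph of the natural height function is homeomorphic to a
closed interval. -/
theorem reeb_graph_of_height_is_interval (m : ℕ) (hm : 2 ≤ m) :
    ∃ φ : Quot (fun x y : sphere (0 : EuclideanSpace ℝ (Fin (m + 1))) 1 =>
          y ∈ connectedComponentIn
            {z : sphere (0 : EuclideanSpace ℝ (Fin (m + 1))) 1 |
              (z : EuclideanSpace ℝ (Fin (m + 1))) 0 =
                (x : EuclideanSpace ℝ (Fin (m + 1))) 0} x) ≃ₜ Set.Icc (-1 : ℝ) 1,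
      ∀ x : sphere (0 : EuclideanSpace ℝ (Fin (m + 1))) 1,
        (φ (Quot.mk _ x) : ℝ) = (x : EuclideanSpace ℝ (Fin (m + 1))) 0 := by
  set r : sphere (0 : EuclideanSpace ℝ (Fin (m + 1))) 1 →
      sphere (0 : EuclideanSpace ℝ (Fin (m + 1))) 1 → Prop := fun x y =>
    y ∈ connectedComponentIn
      {z : sphere (0 : EuclideanSpace ℝ (Fin (m + 1))) 1 |
        (z : EuclideanSpace ℝ (Fin (m + 1))) 0 = (x : EuclideanSpace ℝ (Fin (m + 1))) 0} x with hr
  have hmem : ∀ x : sphere (0 : EuclideanSpace ℝ (Fin (m + 1))) 1,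
      (x : EuclideanSpace ℝ (Fin (m + 1))) 0 ∈ Set.Icc (-1 : ℝ) 1 := by
    intro x
    have hx : ‖(x : EuclideanSpace ℝ (Fin (m + 1)))‖ = 1 := by
      exact mem_sphere_zero_iff_norm.mp x.2
    have habs : |(x : EuclideanSpace ℝ (Fin (m + 1))) 0| ≤ 1 := by
      have h1 := abs_real_inner_le_norm (EuclideanSpace.single (0 : Fin (m + 1)) (1 : ℝ))
        (x : EuclideanSpace ℝ (Fin (m + 1)))
      rw [EuclideanSpace.inner_single_left, EuclideanSpace.norm_single, hx] at h1
      simpa using h1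
    exact Set.mem_Icc.mpr (abs_le.mp habs)
  set f0 : sphere (0 : EuclideanSpace ℝ (Fin (m + 1))) 1 → Set.Icc (-1 : ℝ) 1 :=
    fun x => ⟨(x : EuclideanSpace ℝ (Fin (m + 1))) 0, hmem x⟩ with hf0
  have hresp : ∀ x y, r x y → f0 x = f0 y := by
    intro x y hxy
    have h2 := connectedComponentIn_subset
      {z : sphere (0 : EuclideanSpace ℝ (Fin (m + 1))) 1 |
        (z : EuclideanSpace ℝ (Fin (m + 1))) 0 = (x : EuclideanSpace ℝ (Fin (m + 1))) 0} x hxy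
    exact Subtype.ext (Eq.symm h2)
  have hinj : Function.Injective (Quot.lift f0 hresp) := by
    intro a b
    refine Quot.induction_on₂ a b ?_
    intro x y hxy
    have hxy' : (y : EuclideanSpace ℝ (Fin (m + 1))) 0 =
        (x : EuclideanSpace ℝ (Fin (m + 1))) 0 := (congrArg Subtype.val hxy).symm
    apply Quot.sound
    have hpre := aux_level_preconnected m hm ((x : EuclideanSpace ℝ (Fin (m + 1))) 0) (hmem x)
    exact hpre.subset_connectedComponentIn (by simp) subset_rfl hxy'
  have hsurj : Function.Surjective (Quot.lift f0 hresp) := by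
    rintro ⟨c, hc⟩
    rw [Set.mem_Icc] at hc
    have hc2 : 0 ≤ 1 - c ^ 2 := by nlinarith [hc.1, hc.2]
    have h10 : (1 : Fin (m + 1)) ≠ 0 := by
      have hlt : (1 : ℕ) < m + 1 := by omega
      simp [Fin.ext_iff, Fin.val_one, Nat.mod_eq_of_lt hlt]
    have hz0 : (Real.sqrt (1 - c ^ 2) • EuclideanSpace.single (1 : Fin (m + 1)) (1 : ℝ)) 0 = 0 := by
      simp only [PiLp.smul_apply, EuclideanSpace.single_apply, if_neg (Ne.symm h10), smul_zero]
    have hzs : ‖c • EuclideanSpace.single (0 : Fin (m + 1)) (1 : ℝ) +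
        Real.sqrt (1 - c ^ 2) • EuclideanSpace.single (1 : Fin (m + 1)) (1 : ℝ)‖ = 1 := by
      have h1 : ‖c • EuclideanSpace.single (0 : Fin (m + 1)) (1 : ℝ) +
          Real.sqrt (1 - c ^ 2) • EuclideanSpace.single (1 : Fin (m + 1)) (1 : ℝ)‖ ^ 2 = 1 := by
        rw [aux_norm_sq m c _ hz0]
        have h2 : ‖Real.sqrt (1 - c ^ 2) • EuclideanSpace.single (1 : Fin (m + 1)) (1 : ℝ)‖ =
            Real.sqrt (1 - c ^ 2) := by
          rw [norm_smul, EuclideanSpace.norm_single]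
          simp [abs_of_nonneg (Real.sqrt_nonneg _)]
        rw [h2, Real.sq_sqrt hc2]; ring
      nlinarith [norm_nonneg (c • EuclideanSpace.single (0 : Fin (m + 1)) (1 : ℝ) +
        Real.sqrt (1 - c ^ 2) • EuclideanSpace.single (1 : Fin (m + 1)) (1 : ℝ))]
    refine ⟨Quot.mk r ⟨_, by simpa [mem_sphere_zero_iff_norm] using hzs⟩, ?_⟩
    apply Subtype.ext
    show (c • EuclideanSpace.single (0 : Fin (m + 1)) (1 : ℝ) +
      Real.sqrt (1 - c ^ 2) • EuclideanSpace.single (1 : Fin (m + 1)) (1 : ℝ)) 0 = c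
    simp only [PiLp.add_apply, PiLp.smul_apply, EuclideanSpace.single_apply, if_pos rfl,
      if_neg (Ne.symm h10), smul_eq_mul, mul_one, smul_zero, add_zero]
    simp
  have hcont : Continuous (Quot.lift f0 hresp) := by
    apply continuous_quot_lift hresp
    apply Continuous.subtype_mk
    exact (EuclideanSpace.proj (0 : Fin (m + 1)) :
      EuclideanSpace ℝ (Fin (m + 1)) →L[ℝ] ℝ).continuous.comp continuous_subtype_val
  have hecont : Continuous (Equiv.ofBijective (Quot.lift f0 hresp) ⟨hinj, hsurj⟩) := hcont
  refine ⟨Continuous.homeoOfEquivCompactToT2 hecont, fun x => ?_⟩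
  simp only [Continuous.homeoOfEquivCompactToT2, Homeomorph.homeomorph_mk_coe,
    Equiv.ofBijective_apply]
  rfl
end

section
/- The image of M under the projection π : (x, y) ↦ x equals the set {x ∈ ℝ² : for every j' : Fin l', the product ∏_{j with m(j) = j'} f_j(x) is nonnegative}. In particular, since each f_j is nonnegative on D̄ := {x ∈ ℝ² : f_j(x) ≥ 0 for all j}, the closure region D̄ is contained in π(M). -/
open Metric

/-- For the circle construction `M = {(x,y) : ∀ j', ∏_{m(j)=j'} f_j(x) = ‖y_{j'}‖²}` with
`f_j(x) = r_j² - ‖x - p_j‖²`, the image of `M` under the projection `(x,y) ↦ x` is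
exactly the set of points where all the products are nonnegative; in particular the
region `D̄ = {x : f_j(x) ≥ 0 for all j}` is contained in this image. -/
theorem circle_construction_image_general (l l' : ℕ) (hl : 0 < l) (hl' : 0 < l')
    (mlab : Fin l → Fin l') (I : Fin l' → ℕ)
    (p : Fin l → EuclideanSpace ℝ (Fin 2)) (r : Fin l → ℝ) (hr : ∀ j, 0 < r j) :
    Prod.fst ''
        {z : EuclideanSpace ℝ (Fin 2) × Π j' : Fin l', EuclideanSpace ℝ (Fin (I j' + 1)) |
          ∀ j' : Fin l',
            ∏ j ∈ Finset.univ.filter (fun j => mlab j = j'),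
              (r j ^ 2 - ‖z.1 - p j‖ ^ 2) = ‖z.2 j'‖ ^ 2} =
      {x : EuclideanSpace ℝ (Fin 2) | ∀ j' : Fin l',
        0 ≤ ∏ j ∈ Finset.univ.filter (fun j => mlab j = j'), (r j ^ 2 - ‖x - p j‖ ^ 2)} ∧
    {x : EuclideanSpace ℝ (Fin 2) | ∀ j : Fin l, 0 ≤ r j ^ 2 - ‖x - p j‖ ^ 2} ⊆
      Prod.fst ''
        {z : EuclideanSpace ℝ (Fin 2) × Π j' : Fin l', EuclideanSpace ℝ (Fin (I j' + 1)) |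
          ∀ j' : Fin l',
            ∏ j ∈ Finset.univ.filter (fun j => mlab j = j'),
              (r j ^ 2 - ‖z.1 - p j‖ ^ 2) = ‖z.2 j'‖ ^ 2} := by

  have key : Prod.fst ''
        {z : EuclideanSpace ℝ (Fin 2) × Π j' : Fin l', EuclideanSpace ℝ (Fin (I j' + 1)) |
          ∀ j' : Fin l',
            ∏ j ∈ Finset.univ.filter (fun j => mlab j = j'),
              (r j ^ 2 - ‖z.1 - p j‖ ^ 2) = ‖z.2 j'‖ ^ 2} =
      {x : EuclideanSpace ℝ (Fin 2) | ∀ j' : Fin l',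
        0 ≤ ∏ j ∈ Finset.univ.filter (fun j => mlab j = j'), (r j ^ 2 - ‖x - p j‖ ^ 2)} := by
    ext x
    constructor
    · rintro ⟨⟨x', y⟩, hz, rfl⟩
      intro j'
      rw [hz j']
      positivity
    · intro hx
      refine ⟨⟨x, fun j' => EuclideanSpace.single 0
        (Real.sqrt (∏ j ∈ Finset.univ.filter (fun j => mlab j = j'),
          (r j ^ 2 - ‖x - p j‖ ^ 2)))⟩, fun j' => ?_, rfl⟩
      simp only [EuclideanSpace.norm_single, Real.norm_eq_abs,
        abs_of_nonneg (Real.sqrt_nonneg _), Real.sq_sqrt (hx j')]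
  refine ⟨key, ?_⟩
  rw [key]
  intro x hx j'
  exact Finset.prod_nonneg fun j _ => hx j
end

section
/- If the set {x ∈ ℝ² : for every j' : Fin l', the product ∏_{j with m(j) = j'} f_j(x) is nonnegative} is bounded, then M is a compact subset of ℝ² × Π_{j' : Fin l'} EuclideanSpace ℝ (Fin (I_{j'} + 1)). -/
open Metric

/-- If the region `{x : ∀ j', ∏_{m(j)=j'} f_j(x) ≥ 0}` is bounded, then the real
algebraic set `M = {(x,y) : ∀ j', ∏_{m(j)=j'} f_j(x) = ‖y_{j'}‖²}` (with
`f_j(x) = r_j² - ‖x - p_j‖²`) is compact. -/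
theorem circle_construction_compact (l l' : ℕ) (hl : 0 < l) (hl' : 0 < l')
    (mlab : Fin l → Fin l') (I : Fin l' → ℕ)
    (p : Fin l → EuclideanSpace ℝ (Fin 2)) (r : Fin l → ℝ) (hr : ∀ j, 0 < r j)
    (hbdd : Bornology.IsBounded
      {x : EuclideanSpace ℝ (Fin 2) | ∀ j' : Fin l',
        0 ≤ ∏ j ∈ Finset.univ.filter (fun j => mlab j = j'), (r j ^ 2 - ‖x - p j‖ ^ 2)}) :
    IsCompact
      {z : EuclideanSpace ℝ (Fin 2) × Π j' : Fin l', EuclideanSpace ℝ (Fin (I j' + 1)) |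
        ∀ j' : Fin l',
          ∏ j ∈ Finset.univ.filter (fun j => mlab j = j'),
            (r j ^ 2 - ‖z.1 - p j‖ ^ 2) = ‖z.2 j'‖ ^ 2} := by
  haveI : Nonempty (Fin l') := ⟨⟨0, hl'⟩⟩
  set S : Set (EuclideanSpace ℝ (Fin 2)) :=
    {x | ∀ j' : Fin l',
      0 ≤ ∏ j ∈ Finset.univ.filter (fun j => mlab j = j'), (r j ^ 2 - ‖x - p j‖ ^ 2)} with hS
  set g : Fin l' → EuclideanSpace ℝ (Fin 2) → ℝ := fun j' x =>
    ∏ j ∈ Finset.univ.filter (fun j => mlab j = j'), (r j ^ 2 - ‖x - p j‖ ^ 2) with hg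
  have hgc : ∀ j', Continuous (g j') := by
    intro j'
    apply continuous_finset_prod
    intro j _
    exact continuous_const.sub (((continuous_id.sub continuous_const).norm).pow 2)
  -- the closure of S is compact
  have hK : IsCompact (closure S) :=
    Metric.isCompact_iff_isClosed_bounded.mpr ⟨isClosed_closure, hbdd.closure⟩
  -- bound on each g j' over closure S
  have hbound : ∀ j', ∃ C : ℝ, ∀ x ∈ closure S, ‖g j' x‖ ≤ C := fun j' =>
    hK.exists_bound_of_continuousOn (hgc j').continuousOn
  choose C hC using hbound
  set R : ℝ := Finset.univ.sup' Finset.univ_nonempty (fun j' => Real.sqrt (C j')) with hR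
  have hR0 : 0 ≤ R := by
    rw [hR]
    exact le_trans (Real.sqrt_nonneg _)
      (Finset.le_sup' (fun j' => Real.sqrt (C j')) (Finset.mem_univ (Classical.arbitrary (Fin l'))))
  apply Metric.isCompact_iff_isClosed_bounded.mpr
  constructor
  · have : {z : EuclideanSpace ℝ (Fin 2) × Π j' : Fin l', EuclideanSpace ℝ (Fin (I j' + 1)) |
        ∀ j' : Fin l',
          ∏ j ∈ Finset.univ.filter (fun j => mlab j = j'),
            (r j ^ 2 - ‖z.1 - p j‖ ^ 2) = ‖z.2 j'‖ ^ 2}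
        = ⋂ j' : Fin l', {z | g j' z.1 = ‖z.2 j'‖ ^ 2} := by
      ext z; simp [Set.mem_iInter, hg]
    rw [this]
    refine isClosed_iInter fun j' => isClosed_eq ((hgc j').comp continuous_fst) ?_
    exact (((continuous_apply j').comp continuous_snd).norm).pow 2
  · apply Bornology.IsBounded.subset (hbdd.prod (isBounded_closedBall (x := 0) (r := R)))
    rintro ⟨x, y⟩ hz
    simp only [Set.mem_setOf_eq] at hz
    constructor
    · intro j'
      rw [hz j']
      positivity
    · simp only [mem_closedBall]
      rw [dist_pi_le_iff hR0]
      intro j'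
      have hxS : x ∈ S := by
        intro j''
        rw [hz j'']
        positivity
      have h1 : ‖y j'‖ ^ 2 ≤ C j' := by
        have := hC j' x (subset_closure hxS)
        calc ‖y j'‖ ^ 2 = g j' x := (hz j').symm
          _ ≤ ‖g j' x‖ := le_abs_self _
          _ ≤ C j' := this
      have h2 : ‖y j'‖ ≤ Real.sqrt (C j') := by
        rw [Real.le_sqrt (norm_nonneg _)
          (le_trans (norm_nonneg _) (hC j' x (subset_closure hxS)))]
        exact h1
      calc dist (y j') ((0 : Π j' : Fin l', EuclideanSpace ℝ (Fin (I j' + 1))) j')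
          = ‖y j'‖ := by simp
        _ ≤ Real.sqrt (C j') := h2
        _ ≤ R := Finset.le_sup' (fun j' => Real.sqrt (C j')) (Finset.mem_univ j')
end

section
/- Let E be a real normed vector space and let f : Fin n → E → ℝ and g : Fin n' → E → ℝ be two families of functions, each differentiable at a point x₀ ∈ E. Suppose there are indices j₁ and j₂ with f_{j₁}(x₀) = 0 and g_{j₂}(x₀) = 0, that f_i(x₀) > 0 for i ≠ j₁ and g_i(x₀) > 0 for i ≠ j₂, and that the continuous linear functionals fderiv ℝ f_{j₁} x₀ and fderiv ℝ g_{j₂} x₀ are linearly independent. Then the Fréchet derivative at x₀ of the map x ↦ (∏_i f_i(x), ∏_i g_i(x)) from E to ℝ² is surjective. -/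
/-- Two linearly independent continuous linear functionals jointly surject onto `ℝ × ℝ`. -/
lemma pair_surjective_of_indep {E : Type*} [NormedAddCommGroup E] [NormedSpace ℝ E]
    (L₁ L₂ : E →L[ℝ] ℝ) (hindep : LinearIndependent ℝ ![L₁, L₂]) (a b : ℝ) :
    ∃ v, L₁ v = a ∧ L₂ v = b := by
  set T : E →ₗ[ℝ] ℝ × ℝ := (L₁ : E →ₗ[ℝ] ℝ).prod (L₂ : E →ₗ[ℝ] ℝ) with hT
  have hrange : LinearMap.range T = ⊤ := by
    by_contra h
    obtain ⟨φ, hφne, hφ⟩ := Submodule.exists_dual_map_eq_bot_of_lt_top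
      (p := LinearMap.range T) (lt_top_iff_ne_top.mpr h) inferInstance
    have hzero : ∀ v : E, φ (T v) = 0 := by
      intro v
      have : φ (T v) ∈ (LinearMap.range T).map φ := ⟨T v, ⟨v, rfl⟩, rfl⟩
      rwa [hφ, Submodule.mem_bot] at this
    set s := φ (1, 0) with hs
    set t := φ (0, 1) with ht
    have hcomb : s • L₁ + t • L₂ = 0 := by
      ext v
      have h1 : (T v : ℝ × ℝ) = L₁ v • ((1 : ℝ), (0 : ℝ)) + L₂ v • ((0 : ℝ), (1 : ℝ)) := by
        simp [hT, Prod.ext_iff]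
      have := hzero v
      rw [h1, map_add, map_smul, map_smul] at this
      simpa [mul_comm] using this
    obtain ⟨hs0, ht0⟩ := (LinearIndependent.pair_iff.mp hindep) s t hcomb
    apply hφne
    have : ∀ p : ℝ × ℝ, φ p = 0 := by
      intro p
      have hp : p = p.1 • ((1 : ℝ), (0 : ℝ)) + p.2 • ((0 : ℝ), (1 : ℝ)) := by
        simp [Prod.ext_iff]
      rw [hp, map_add, map_smul, map_smul, ← hs, ← ht, hs0, ht0]
      simp
    exact LinearMap.ext fun p => by simpa using this p
  have := hrange ▸ Submodule.mem_top (R := ℝ) (x := ((a, b) : ℝ × ℝ))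
  obtain ⟨v, hv⟩ := this
  exact ⟨v, congrArg Prod.fst hv, congrArg Prod.snd hv⟩

/-- Derivative of a product of functions one of which vanishes at the point. -/
lemma hasFDerivAt_prod_of_zero {E : Type*} [NormedAddCommGroup E] [NormedSpace ℝ E]
    {n : ℕ} (f : Fin n → E → ℝ) (x₀ : E) (hdf : ∀ i, DifferentiableAt ℝ (f i) x₀)
    (j : Fin n) (hf0 : f j x₀ = 0) :
    HasFDerivAt (fun x => ∏ i, f i x)
      ((∏ i ∈ Finset.univ.erase j, f i x₀) • fderiv ℝ (f j) x₀) x₀ := by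
  have h := HasFDerivAt.finset_prod (u := Finset.univ)
    (g := f) (g' := fun i => fderiv ℝ (f i) x₀)
    (fun i _ => (hdf i).hasFDerivAt)
  have hsum : (∑ i, (∏ k ∈ Finset.univ.erase i, f k x₀) • fderiv ℝ (f i) x₀)
      = (∏ i ∈ Finset.univ.erase j, f i x₀) • fderiv ℝ (f j) x₀ := by
    rw [Finset.sum_eq_single j]
    · intro i _ hij
      have : (∏ k ∈ Finset.univ.erase i, f k x₀) = 0 :=
        Finset.prod_eq_zero (Finset.mem_erase.mpr ⟨(Ne.symm hij), Finset.mem_univ j⟩) hf0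
      rw [this, zero_smul]
    · intro h; exact absurd (Finset.mem_univ j) h
  rw [hsum] at h
  exact h

/-- If each `f i` and `g i` is differentiable at `x₀`, `f j₁` and `g j₂` vanish at `x₀`
with linearly independent derivatives, and the other factors are positive at `x₀`, then
the derivative at `x₀` of `x ↦ (∏ i, f i x, ∏ i, g i x) : E → ℝ × ℝ` is surjective. -/
theorem fderiv_pair_of_products_surjective {E : Type*} [NormedAddCommGroup E]
    [NormedSpace ℝ E] (n n' : ℕ) (f : Fin n → E → ℝ) (g : Fin n' → E → ℝ) (x₀ : E)
    (hdf : ∀ i, DifferentiableAt ℝ (f i) x₀) (hdg : ∀ i, DifferentiableAt ℝ (g i) x₀)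
    (j₁ : Fin n) (j₂ : Fin n') (hf0 : f j₁ x₀ = 0) (hg0 : g j₂ x₀ = 0)
    (hfpos : ∀ i, i ≠ j₁ → 0 < f i x₀) (hgpos : ∀ i, i ≠ j₂ → 0 < g i x₀)
    (hindep : LinearIndependent ℝ ![fderiv ℝ (f j₁) x₀, fderiv ℝ (g j₂) x₀]) :
    Function.Surjective
      (fderiv ℝ (fun x => (∏ i, f i x, ∏ i, g i x)) x₀ : E →L[ℝ] ℝ × ℝ) := by
  set L₁ := fderiv ℝ (f j₁) x₀
  set L₂ := fderiv ℝ (g j₂) x₀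
  set c₁ := ∏ i ∈ Finset.univ.erase j₁, f i x₀ with hc₁
  set c₂ := ∏ i ∈ Finset.univ.erase j₂, g i x₀ with hc₂
  have hc₁pos : 0 < c₁ :=
    Finset.prod_pos fun i hi => hfpos i (Finset.mem_erase.mp hi).1
  have hc₂pos : 0 < c₂ :=
    Finset.prod_pos fun i hi => hgpos i (Finset.mem_erase.mp hi).1
  have h1 := hasFDerivAt_prod_of_zero f x₀ hdf j₁ hf0
  have h2 := hasFDerivAt_prod_of_zero g x₀ hdg j₂ hg0
  have hpair := (h1.prodMk h2).fderiv
  rw [hpair]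
  rintro ⟨a, b⟩
  obtain ⟨v, hv₁, hv₂⟩ := pair_surjective_of_indep L₁ L₂ hindep (a / c₁) (b / c₂)
  refine ⟨v, ?_⟩
  simp only [ContinuousLinearMap.prod_apply, ContinuousLinearMap.coe_smul',
    Pi.smul_apply, hv₁, hv₂, smul_eq_mul]
  change (c₁ * L₁ v, c₂ * L₂ v) = (a, b)
  rw [hv₁, hv₂]
  rw [mul_div_cancel₀ a hc₁pos.ne', mul_div_cancel₀ b hc₂pos.ne']
end

section
/- Assume: (i) for every x ∈ D̄ := {x ∈ ℝ² : f_j(x) ≥ 0 for all j}, at most two of the values f_j(x) vanish; and (ii) whenever j₁ ≠ j₂ and x ∈ D̄ satisfy f_{j₁}(x) = f_{j₂}(x) = 0, the derivatives fderiv ℝ f_{j₁} x and fderiv ℝ f_{j₂} x are linearly independent and the labels satisfy m(j₁) ≠ m(j₂). Define F : ℝ² × Π_{j'} EuclideanSpace ℝ (Fin (I_{j'}+1)) → ℝ^{l'} by F(x, y)_{j'} = ∏_{j with m(j) = j'} f_j(x) - ‖y_{j'}‖². Then at every point (x, y) of the zero set M of F with x ∈ D̄, the Fréchet derivative fderiv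 ℝ F (x, y) is a surjective linear map onto ℝ^{l'}. (Hence M is a non-singular real algebraic set over D̄.) -/
open Metric

lemma pair_surj {E : Type*} [NormedAddCommGroup E] [NormedSpace ℝ E]
    (g₁ g₂ : E →L[ℝ] ℝ) (h : LinearIndependent ℝ ![g₁, g₂]) (c₁ c₂ : ℝ) :
    ∃ u, g₁ u = c₁ ∧ g₂ u = c₂ := by
  have hrange : LinearMap.range ((g₁ : E →ₗ[ℝ] ℝ).prod (g₂ : E →ₗ[ℝ] ℝ)) = ⊤ := by
    by_contra hne
    obtain ⟨φ, hφne, hφ⟩ := Submodule.exists_dual_map_eq_bot_of_lt_top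
      (lt_top_iff_ne_top.2 hne) inferInstance
    have hzero : ∀ u : E, φ (g₁ u, g₂ u) = 0 := by
      intro u
      have hm : ((g₁ u, g₂ u) : ℝ × ℝ) ∈
          LinearMap.range ((g₁ : E →ₗ[ℝ] ℝ).prod (g₂ : E →ₗ[ℝ] ℝ)) := ⟨u, rfl⟩
      have := Submodule.mem_map_of_mem (f := φ) hm
      rw [hφ] at this
      simpa using this
    have hrep : ∀ s t : ℝ, φ (s, t) = s * φ (1, 0) + t * φ (0, 1) := by
      intro s t
      have : (s, t) = s • ((1 : ℝ), (0 : ℝ)) + t • ((0 : ℝ), (1 : ℝ)) := by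
        simp [Prod.ext_iff]
      rw [this, map_add, map_smul, map_smul]
      simp [mul_comm]
    have hcomb : φ (1, 0) • g₁ + φ (0, 1) • g₂ = 0 := by
      ext u
      have := hzero u
      rw [hrep] at this
      simpa [mul_comm] using this
    obtain ⟨h1, h2⟩ := LinearIndependent.pair_iff.1 h _ _ hcomb
    apply hφne
    apply LinearMap.ext
    rintro ⟨s, t⟩
    rw [hrep, h1, h2]
    simp
  have hmem : ((c₁, c₂) : ℝ × ℝ) ∈
      LinearMap.range ((g₁ : E →ₗ[ℝ] ℝ).prod (g₂ : E →ₗ[ℝ] ℝ)) := by rw [hrange]; trivial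
  obtain ⟨u, hu⟩ := hmem
  exact ⟨u, congrArg Prod.fst hu, congrArg Prod.snd hu⟩

lemma circle_hasFDerivAt {E : Type*} [NormedAddCommGroup E] [InnerProductSpace ℝ E]
    (p : E) (r : ℝ) (x : E) :
    HasFDerivAt (fun y : E => r ^ 2 - ‖y - p‖ ^ 2) (-(2 • innerSL ℝ (x - p))) x := by
  have h1 : HasFDerivAt (fun y : E => ‖y - p‖ ^ 2)
      (2 • (innerSL ℝ (x - p)).comp (ContinuousLinearMap.id ℝ E)) x := by
    simpa using ((hasFDerivAt_id x).sub_const p).norm_sq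
  have h2 := (hasFDerivAt_const (r ^ 2) x).sub h1
  refine h2.congr_fderiv ?_
  ext u
  simp

set_option maxHeartbeats 2000000 in
/-- Non-singularity of the circle construction over `D̄`: assume no point of
`D̄ = {x : f_j(x) ≥ 0 for all j}` lies on more than two circles, and that whenever two
circles meet at a point of `D̄` their derivatives there are linearly independent and
their labels differ. Then at every point `(x, y)` of the zero set
`M = {F = 0}` of `F(x,y)_{j'} = ∏_{m(j)=j'} f_j(x) - ‖y_{j'}‖²` with `x ∈ D̄`, the
Fréchet derivative of `F` is surjective onto `ℝ^{l'}`. -/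
theorem circle_construction_nonsingular (l l' : ℕ) (hl : 0 < l) (hl' : 0 < l')
    (mlab : Fin l → Fin l') (I : Fin l' → ℕ)
    (p : Fin l → EuclideanSpace ℝ (Fin 2)) (r : Fin l → ℝ) (hr : ∀ j, 0 < r j)
    (hi : ∀ x : EuclideanSpace ℝ (Fin 2), (∀ j : Fin l, 0 ≤ r j ^ 2 - ‖x - p j‖ ^ 2) →
      (Finset.univ.filter (fun j : Fin l => r j ^ 2 - ‖x - p j‖ ^ 2 = 0)).card ≤ 2)
    (hii : ∀ j₁ j₂ : Fin l, j₁ ≠ j₂ → ∀ x : EuclideanSpace ℝ (Fin 2),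
      (∀ j : Fin l, 0 ≤ r j ^ 2 - ‖x - p j‖ ^ 2) →
      r j₁ ^ 2 - ‖x - p j₁‖ ^ 2 = 0 → r j₂ ^ 2 - ‖x - p j₂‖ ^ 2 = 0 →
      LinearIndependent ℝ
          ![fderiv ℝ (fun y : EuclideanSpace ℝ (Fin 2) => r j₁ ^ 2 - ‖y - p j₁‖ ^ 2) x,
            fderiv ℝ (fun y : EuclideanSpace ℝ (Fin 2) => r j₂ ^ 2 - ‖y - p j₂‖ ^ 2) x] ∧
        mlab j₁ ≠ mlab j₂) :
    ∀ z : EuclideanSpace ℝ (Fin 2) × Π j' : Fin l', EuclideanSpace ℝ (Fin (I j' + 1)),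
      (∀ j' : Fin l',
        ∏ j ∈ Finset.univ.filter (fun j => mlab j = j'),
          (r j ^ 2 - ‖z.1 - p j‖ ^ 2) = ‖z.2 j'‖ ^ 2) →
      (∀ j : Fin l, 0 ≤ r j ^ 2 - ‖z.1 - p j‖ ^ 2) →
      Function.Surjective
        (fderiv ℝ
          (fun w : EuclideanSpace ℝ (Fin 2) × Π j' : Fin l', EuclideanSpace ℝ (Fin (I j' + 1)) =>
            (WithLp.toLp 2 (fun j' : Fin l' =>
              (∏ j ∈ Finset.univ.filter (fun j => mlab j = j'),
                (r j ^ 2 - ‖w.1 - p j‖ ^ 2)) - ‖w.2 j'‖ ^ 2) :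
              EuclideanSpace ℝ (Fin l'))) z) := by
  classical
  intro z hzero hnonneg
  obtain ⟨x, y⟩ := z
  replace hzero : ∀ j' : Fin l',
      ∏ j ∈ Finset.univ.filter (fun j => mlab j = j'),
        (r j ^ 2 - ‖x - p j‖ ^ 2) = ‖y j'‖ ^ 2 := hzero
  replace hnonneg : ∀ j : Fin l, 0 ≤ r j ^ 2 - ‖x - p j‖ ^ 2 := hnonneg
  -- circle derivatives
  have hfg : ∀ j, HasFDerivAt (fun w : EuclideanSpace ℝ (Fin 2) => r j ^ 2 - ‖w - p j‖ ^ 2)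
      (-(2 • innerSL ℝ (x - p j))) x := fun j => circle_hasFDerivAt _ _ _
  set g : Fin l → (EuclideanSpace ℝ (Fin 2) →L[ℝ] ℝ) :=
    fun j => -(2 • innerSL ℝ (x - p j)) with hg
  have hfderiv : ∀ j, fderiv ℝ (fun w : EuclideanSpace ℝ (Fin 2) =>
      r j ^ 2 - ‖w - p j‖ ^ 2) x = g j := fun j => (hfg j).fderiv
  have hgne : ∀ j, r j ^ 2 - ‖x - p j‖ ^ 2 = 0 → g j ≠ 0 := by
    intro j hj hzero'
    have h1 : g j (x - p j) = 0 := by rw [hzero']; rfl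
    rw [hg] at h1
    simp only [ContinuousLinearMap.neg_apply, ContinuousLinearMap.smul_apply,
      innerSL_apply_apply, real_inner_self_eq_norm_sq] at h1
    have hx2 : ‖x - p j‖ ^ 2 = r j ^ 2 := by linarith
    have : (0:ℝ) < r j ^ 2 := pow_pos (hr j) 2
    rw [hx2, nsmul_eq_mul] at h1
    push_cast at h1
    nlinarith
  -- uniqueness of vanishing circle within a label
  have huniq : ∀ j k : Fin l, mlab j = mlab k →
      r j ^ 2 - ‖x - p j‖ ^ 2 = 0 → r k ^ 2 - ‖x - p k‖ ^ 2 = 0 → j = k := by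
    intro j k hjk hj0 hk0
    by_contra hne
    exact (hii j k hne x hnonneg hj0 hk0).2 hjk
  -- product derivatives
  have hPd : ∀ j' : Fin l', HasFDerivAt (fun w : EuclideanSpace ℝ (Fin 2) =>
      ∏ j ∈ Finset.univ.filter (fun j => mlab j = j'), (r j ^ 2 - ‖w - p j‖ ^ 2))
      (∑ j ∈ Finset.univ.filter (fun j => mlab j = j'),
        (∏ k ∈ (Finset.univ.filter (fun j => mlab j = j')).erase j,
          (r k ^ 2 - ‖x - p k‖ ^ 2)) • g j) x := by
    intro j'
    exact HasFDerivAt.finset_prod (fun j _ => hfg j)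
  set dP : Fin l' → (EuclideanSpace ℝ (Fin 2) →L[ℝ] ℝ) := fun j' =>
    ∑ j ∈ Finset.univ.filter (fun j => mlab j = j'),
      (∏ k ∈ (Finset.univ.filter (fun j => mlab j = j')).erase j,
        (r k ^ 2 - ‖x - p k‖ ^ 2)) • g j with hdP
  -- structure of dP at a vanishing label
  have hdPs : ∀ (j' : Fin l') (j₀ : Fin l), mlab j₀ = j' → r j₀ ^ 2 - ‖x - p j₀‖ ^ 2 = 0 →
      dP j' = (∏ k ∈ (Finset.univ.filter (fun j => mlab j = j')).erase j₀,
          (r k ^ 2 - ‖x - p k‖ ^ 2)) • g j₀ ∧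
        0 < ∏ k ∈ (Finset.univ.filter (fun j => mlab j = j')).erase j₀,
          (r k ^ 2 - ‖x - p k‖ ^ 2) := by
    intro j' j₀ hm0 h00
    constructor
    · rw [hdP]
      apply Finset.sum_eq_single j₀
      · intro j hj hne
        have hj₀mem : j₀ ∈ (Finset.univ.filter (fun j => mlab j = j')).erase j := by
          refine Finset.mem_erase.2 ⟨fun h => hne h.symm, ?_⟩
          simp [hm0]
        rw [Finset.prod_eq_zero hj₀mem h00, zero_smul]
      · intro h
        exact absurd (by simp [hm0]) h
    · apply Finset.prod_pos
      intro k hk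
      rcases Finset.mem_erase.1 hk with ⟨hkne, hkmem⟩
      rcases lt_or_eq_of_le (hnonneg k) with h | h
      · exact h
      · exfalso
        apply hkne
        exact huniq k j₀ (by simp at hkmem; rw [hkmem, hm0]) h.symm h00
  -- the set of vanishing labels
  set T : Finset (Fin l') := Finset.univ.filter (fun j' =>
    ∏ j ∈ Finset.univ.filter (fun j => mlab j = j'), (r j ^ 2 - ‖x - p j‖ ^ 2) = 0) with hT
  have hex : ∀ j' : Fin l', ∃ j : Fin l,
      (∏ j ∈ Finset.univ.filter (fun j => mlab j = j'), (r j ^ 2 - ‖x - p j‖ ^ 2) = 0 →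
        mlab j = j' ∧ r j ^ 2 - ‖x - p j‖ ^ 2 = 0) := by
    intro j'
    by_cases h : ∏ j ∈ Finset.univ.filter (fun j => mlab j = j'),
        (r j ^ 2 - ‖x - p j‖ ^ 2) = 0
    · obtain ⟨j, hjQ, hj0⟩ := Finset.prod_eq_zero_iff.1 h
      exact ⟨j, fun _ => ⟨by simpa using hjQ, hj0⟩⟩
    · exact ⟨⟨0, hl⟩, fun hc => absurd hc h⟩
  choose j₀ hj₀ using hex
  have hTmem : ∀ j' ∈ T, mlab (j₀ j') = j' ∧ r (j₀ j') ^ 2 - ‖x - p (j₀ j')‖ ^ 2 = 0 := by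
    intro j' hj'
    exact hj₀ j' (by simpa [hT] using hj')
  have hTcard : T.card ≤ 2 := by
    have hinj : Set.InjOn j₀ T := by
      intro a ha b hb hab
      rw [← (hTmem a ha).1, ← (hTmem b hb).1, hab]
    calc T.card ≤ (Finset.univ.filter (fun j : Fin l =>
        r j ^ 2 - ‖x - p j‖ ^ 2 = 0)).card := by
          apply Finset.card_le_card_of_injOn j₀ _ hinj
          intro j' hj'
          simp [(hTmem j' hj').2]
      _ ≤ 2 := hi x hnonneg
  -- solving the x-part
  have hxpart : ∀ c : Fin l' → ℝ, ∃ u : EuclideanSpace ℝ (Fin 2),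
      ∀ j' ∈ T, dP j' u = c j' := by
    intro c
    have h2 : T.card = 0 ∨ T.card = 1 ∨ T.card = 2 := by omega
    rcases h2 with h | h | h
    · refine ⟨0, fun j' hj' => ?_⟩
      rw [Finset.card_eq_zero.1 h] at hj'
      exact absurd hj' (Finset.notMem_empty _)
    · obtain ⟨a, ha⟩ := Finset.card_eq_one.1 h
      have haT : a ∈ T := by rw [ha]; exact Finset.mem_singleton_self a
      obtain ⟨hma, h0a⟩ := hTmem a haT
      obtain ⟨hdpa, hca⟩ := hdPs a (j₀ a) hma h0a
      have hgne' := hgne (j₀ a) h0a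
      have : ∃ u₀, g (j₀ a) u₀ ≠ 0 := by
        by_contra hcon
        push_neg at hcon
        exact hgne' (ContinuousLinearMap.ext fun u => by simp [hcon u])
      obtain ⟨u₀, hu₀⟩ := this
      set ca := ∏ k ∈ (Finset.univ.filter (fun j => mlab j = a)).erase (j₀ a),
        (r k ^ 2 - ‖x - p k‖ ^ 2)
      refine ⟨(c a / (ca * g (j₀ a) u₀)) • u₀, fun j' hj' => ?_⟩
      rw [ha, Finset.mem_singleton] at hj'
      subst hj'
      rw [hdpa]
      simp only [ContinuousLinearMap.smul_apply, map_smul, smul_eq_mul]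
      field_simp
    · obtain ⟨a, b, hab, hTab⟩ := Finset.card_eq_two.1 h
      have haT : a ∈ T := by rw [hTab]; simp
      have hbT : b ∈ T := by rw [hTab]; simp
      obtain ⟨hma, h0a⟩ := hTmem a haT
      obtain ⟨hmb, h0b⟩ := hTmem b hbT
      obtain ⟨hdpa, hca⟩ := hdPs a (j₀ a) hma h0a
      obtain ⟨hdpb, hcb⟩ := hdPs b (j₀ b) hmb h0b
      have hjne : j₀ a ≠ j₀ b := by
        intro hcon
        apply hab
        rw [← hma, ← hmb, hcon]
      have hli := (hii (j₀ a) (j₀ b) hjne x hnonneg h0a h0b).1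
      rw [hfderiv, hfderiv] at hli
      obtain ⟨u, hu1, hu2⟩ := pair_surj _ _ hli
        (c a / ∏ k ∈ (Finset.univ.filter (fun j => mlab j = a)).erase (j₀ a),
          (r k ^ 2 - ‖x - p k‖ ^ 2))
        (c b / ∏ k ∈ (Finset.univ.filter (fun j => mlab j = b)).erase (j₀ b),
          (r k ^ 2 - ‖x - p k‖ ^ 2))
      refine ⟨u, fun j' hj' => ?_⟩
      rw [hTab, Finset.mem_insert, Finset.mem_singleton] at hj'
      rcases hj' with hj' | hj' <;> subst hj'
      · rw [hdpa]
        simp only [ContinuousLinearMap.smul_apply, smul_eq_mul, hu1]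
        field_simp
      · rw [hdpb]
        simp only [ContinuousLinearMap.smul_apply, smul_eq_mul, hu2]
        field_simp
  -- component derivatives of F
  set π : ∀ j' : Fin l', (EuclideanSpace ℝ (Fin 2) ×
      Π j'' : Fin l', EuclideanSpace ℝ (Fin (I j'' + 1))) →L[ℝ]
        EuclideanSpace ℝ (Fin (I j' + 1)) :=
    fun j' => (ContinuousLinearMap.proj j').comp
      (ContinuousLinearMap.snd ℝ (EuclideanSpace ℝ (Fin 2)) _) with hπ
  set A : ∀ _ : Fin l', (EuclideanSpace ℝ (Fin 2) ×
      Π j'' : Fin l', EuclideanSpace ℝ (Fin (I j'' + 1))) →L[ℝ] ℝ :=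
    fun j' => (dP j').comp (ContinuousLinearMap.fst ℝ _ _) -
      2 • (innerSL ℝ (y j')).comp (π j') with hA
  have hGA : ∀ j' : Fin l', HasFDerivAt (fun w : EuclideanSpace ℝ (Fin 2) ×
      Π j'' : Fin l', EuclideanSpace ℝ (Fin (I j'' + 1)) =>
      (∏ j ∈ Finset.univ.filter (fun j => mlab j = j'),
        (r j ^ 2 - ‖w.1 - p j‖ ^ 2)) - ‖w.2 j'‖ ^ 2)
      (A j') (x, y) := by
    intro j'
    have h1 : HasFDerivAt (fun w : EuclideanSpace ℝ (Fin 2) ×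
        Π j'' : Fin l', EuclideanSpace ℝ (Fin (I j'' + 1)) =>
        ∏ j ∈ Finset.univ.filter (fun j => mlab j = j'), (r j ^ 2 - ‖w.1 - p j‖ ^ 2))
        ((dP j').comp (ContinuousLinearMap.fst ℝ _ _)) (x, y) :=
      by have h := (hPd j').comp (x, y) (hasFDerivAt_fst (𝕜 := ℝ) (p := (x, y))); exact h
    have h2 : HasFDerivAt (fun w : EuclideanSpace ℝ (Fin 2) ×
        Π j'' : Fin l', EuclideanSpace ℝ (Fin (I j'' + 1)) => ‖w.2 j'‖ ^ 2)
        (2 • (innerSL ℝ (y j')).comp (π j')) (x, y) := by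
      have h2' := (π j').hasFDerivAt (x := (x, y))
      exact h2'.norm_sq
    exact h1.sub h2
  have hFA : HasFDerivAt
      (fun w : EuclideanSpace ℝ (Fin 2) × Π j' : Fin l', EuclideanSpace ℝ (Fin (I j' + 1)) =>
        (WithLp.toLp 2 (fun j' : Fin l' =>
          (∏ j ∈ Finset.univ.filter (fun j => mlab j = j'),
            (r j ^ 2 - ‖w.1 - p j‖ ^ 2)) - ‖w.2 j'‖ ^ 2) :
          EuclideanSpace ℝ (Fin l')))
      ((PiLp.continuousLinearEquiv 2 ℝ _).symm.toContinuousLinearMap.comp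
        (ContinuousLinearMap.pi A)) (x, y) :=
    (PiLp.hasFDerivAt_toLp 2 _).comp (x, y) (hasFDerivAt_pi.2 hGA)
  rw [hFA.fderiv]
  intro c
  obtain ⟨u, hu⟩ := hxpart (fun j' => c j')
  set v : Π j' : Fin l', EuclideanSpace ℝ (Fin (I j' + 1)) := fun j' =>
    if (∏ j ∈ Finset.univ.filter (fun j => mlab j = j'), (r j ^ 2 - ‖x - p j‖ ^ 2)) = 0 then 0
    else ((dP j' u - c j') / (2 * ‖y j'‖ ^ 2)) • y j' with hv
  refine ⟨(u, v), ?_⟩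
  have hcomp : ∀ j' : Fin l', A j' (u, v) = c j' := by
    intro j'
    have hAeval : A j' (u, v) = dP j' u - 2 * (inner ℝ (y j') (v j') : ℝ) := by
      simp [hA, hπ, two_smul]
      ring
    by_cases h : (∏ j ∈ Finset.univ.filter (fun j => mlab j = j'),
        (r j ^ 2 - ‖x - p j‖ ^ 2)) = 0
    · have hvj : v j' = 0 := by rw [hv]; simp [h]
      rw [hAeval, hvj, inner_zero_right]
      simpa using hu j' (by simp [hT, h])
    · have hy2 : ‖y j'‖ ^ 2 ≠ 0 := by rw [← hzero j']; exact h
      have hvj : v j' = ((dP j' u - c j') / (2 * ‖y j'‖ ^ 2)) • y j' := by rw [hv]; simp [h]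
      rw [hAeval, hvj, real_inner_smul_right, real_inner_self_eq_norm_sq]
      field_simp
      have hyn : ‖y j'‖ ≠ 0 := fun h0 => hy2 (by rw [h0]; ring)
      rw [mul_div_cancel_right₀ _ hyn]
      ring
  ext j'
  exact hcomp j'
end

section
/- Let D' := {x ∈ ℝ² : for every j' : Fin l', the product ∏_{j with m(j) = j'} f_j(x) is nonnegative}. If D' is nonempty, connected, and bounded, and if I_{j'} ≥ 1 for every j' : Fin l', then M is a nonempty connected subset of ℝ² × Π_{j' : Fin l'} EuclideanSpace ℝ (Fin (I_{j'} + 1)). -/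
open Metric

/-- If the region `D' = {x : ∀ j', ∏_{m(j)=j'} f_j(x) ≥ 0}` is nonempty, connected and
bounded, and every `I_{j'}` is at least `1`, then the real algebraic set
`M = {(x,y) : ∀ j', ∏_{m(j)=j'} f_j(x) = ‖y_{j'}‖²}` is nonempty and connected. -/
theorem circle_construction_connected (l l' : ℕ) (hl : 0 < l) (hl' : 0 < l')
    (mlab : Fin l → Fin l') (I : Fin l' → ℕ)
    (p : Fin l → EuclideanSpace ℝ (Fin 2)) (r : Fin l → ℝ) (hr : ∀ j, 0 < r j)
    (hne : {x : EuclideanSpace ℝ (Fin 2) | ∀ j' : Fin l',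
      0 ≤ ∏ j ∈ Finset.univ.filter (fun j => mlab j = j'),
        (r j ^ 2 - ‖x - p j‖ ^ 2)}.Nonempty)
    (hconn : IsPreconnected {x : EuclideanSpace ℝ (Fin 2) | ∀ j' : Fin l',
      0 ≤ ∏ j ∈ Finset.univ.filter (fun j => mlab j = j'), (r j ^ 2 - ‖x - p j‖ ^ 2)})
    (hbdd : Bornology.IsBounded {x : EuclideanSpace ℝ (Fin 2) | ∀ j' : Fin l',
      0 ≤ ∏ j ∈ Finset.univ.filter (fun j => mlab j = j'), (r j ^ 2 - ‖x - p j‖ ^ 2)})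
    (hI : ∀ j' : Fin l', 1 ≤ I j') :
    IsConnected
      {z : EuclideanSpace ℝ (Fin 2) × Π j' : Fin l', EuclideanSpace ℝ (Fin (I j' + 1)) |
        ∀ j' : Fin l',
          ∏ j ∈ Finset.univ.filter (fun j => mlab j = j'),
            (r j ^ 2 - ‖z.1 - p j‖ ^ 2) = ‖z.2 j'‖ ^ 2} := by
  classical
  set g : Fin l' → EuclideanSpace ℝ (Fin 2) → ℝ := fun j' x =>
    ∏ j ∈ Finset.univ.filter (fun j => mlab j = j'), (r j ^ 2 - ‖x - p j‖ ^ 2) with hg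
  have hgc : ∀ j', Continuous (g j') := by
    intro j'
    apply continuous_finset_prod
    intro j _
    fun_prop
  set D : Set (EuclideanSpace ℝ (Fin 2)) := {x | ∀ j', 0 ≤ g j' x} with hD
  have hDconn : IsConnected D := ⟨hne, hconn⟩
  have hsph : ∀ j' : Fin l',
      IsConnected (sphere (0 : EuclideanSpace ℝ (Fin (I j' + 1))) 1) := by
    intro j'
    apply isConnected_sphere ?_ _ zero_le_one
    rw [← Module.finrank_eq_rank ℝ]
    have : Module.finrank ℝ (EuclideanSpace ℝ (Fin (I j' + 1))) = I j' + 1 := by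
      simp [finrank_euclideanSpace]
    rw [this]
    have h2 := hI j'
    exact_mod_cast by omega
  set S : Set (EuclideanSpace ℝ (Fin 2) × Π j' : Fin l', EuclideanSpace ℝ (Fin (I j' + 1))) :=
    D ×ˢ Set.univ.pi (fun j' => sphere (0 : EuclideanSpace ℝ (Fin (I j' + 1))) 1) with hS
  have hSconn : IsConnected S := hDconn.prod (isConnected_univ_pi.mpr hsph)
  set F : (EuclideanSpace ℝ (Fin 2) × Π j' : Fin l', EuclideanSpace ℝ (Fin (I j' + 1))) →
      (EuclideanSpace ℝ (Fin 2) × Π j' : Fin l', EuclideanSpace ℝ (Fin (I j' + 1))) :=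
    fun z => (z.1, fun j' => Real.sqrt (g j' z.1) • z.2 j') with hF
  have hFc : Continuous F := by
    refine continuous_fst.prodMk (continuous_pi fun j' => ?_)
    exact (((hgc j').comp continuous_fst).sqrt).smul
      ((continuous_apply j').comp continuous_snd)
  have himg : F '' S = {z : EuclideanSpace ℝ (Fin 2) ×
      Π j' : Fin l', EuclideanSpace ℝ (Fin (I j' + 1)) |
        ∀ j' : Fin l', g j' z.1 = ‖z.2 j'‖ ^ 2} := by
    ext z
    constructor
    · rintro ⟨⟨x, u⟩, ⟨hx, hu⟩, rfl⟩
      intro j'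
      have hu1 : ‖u j'‖ = 1 := by
        have := hu j' (Set.mem_univ _)
        simpa using this
      simp only [hF]
      rw [norm_smul, hu1, mul_one, Real.norm_eq_abs,
        abs_of_nonneg (Real.sqrt_nonneg _), Real.sq_sqrt (hx j')]
    · intro hz
      refine ⟨(z.1, fun j' => if h : z.2 j' = 0 then
          EuclideanSpace.single (0 : Fin (I j' + 1)) (1 : ℝ)
          else ‖z.2 j'‖⁻¹ • z.2 j'), ⟨?_, ?_⟩, ?_⟩
      · intro j'
        rw [hz j']
        positivity
      · intro j' _
        simp only [mem_sphere_iff_norm, sub_zero]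
        by_cases h : z.2 j' = 0
        · simp [h]
        · rw [dif_neg h, norm_smul, norm_inv, norm_norm,
            inv_mul_cancel₀ (norm_ne_zero_iff.mpr h)]
      · simp only [hF]
        refine Prod.ext rfl ?_
        funext j'
        dsimp only
        have hs : Real.sqrt (g j' z.1) = ‖z.2 j'‖ := by
          rw [hz j', Real.sqrt_sq (norm_nonneg _)]
        by_cases h : z.2 j' = 0
        · simp [hs, h]
        · rw [hs, dif_neg h, smul_smul, mul_inv_cancel₀ (norm_ne_zero_iff.mpr h), one_smul]
  have := hSconn.image F hFc.continuousOn
  rw [himg] at this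
  exact this
end

section
/- Suppose (x, y) ∈ M satisfies f_j(x) > 0 for every j : Fin l. Then y_{j'} ≠ 0 for every j' : Fin l', and the Fréchet derivative at y of the map y ↦ (‖y_{j'}‖²)_{j'} from Π_{j'} EuclideanSpace ℝ (Fin (I_{j'}+1)) to ℝ^{l'} is surjective. (Consequently the derivative of the defining map F(x,y)_{j'} = ∏_{j with m(j)=j'} f_j(x) - ‖y_{j'}‖² is already surjective in the y-directions, so the projection of M to ℝ² has no singular points over the open region D = {x : f_j(x) > 0 for all j}.) -/
open Metric

/-- Over the open region `D = {x : f_j(x) > 0 for all j}`, the fibers of the circle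
construction avoid the origins: if `(x, y) ∈ M` and `f_j(x) > 0` for every `j`, then
each `y_{j'} ≠ 0` and the derivative at `y` of `y ↦ (‖y_{j'}‖²)_{j'}` is surjective
onto `ℝ^{l'}`, so the projection of `M` to `ℝ²` has no singular points over `D`. -/
theorem circle_construction_no_singular_over_open_region (l l' : ℕ) (hl : 0 < l)
    (hl' : 0 < l') (mlab : Fin l → Fin l') (I : Fin l' → ℕ)
    (p : Fin l → EuclideanSpace ℝ (Fin 2)) (r : Fin l → ℝ) (hr : ∀ j, 0 < r j)
    (x : EuclideanSpace ℝ (Fin 2)) (y : Π j' : Fin l', EuclideanSpace ℝ (Fin (I j' + 1)))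
    (hM : ∀ j' : Fin l',
      ∏ j ∈ Finset.univ.filter (fun j => mlab j = j'),
        (r j ^ 2 - ‖x - p j‖ ^ 2) = ‖y j'‖ ^ 2)
    (hpos : ∀ j : Fin l, 0 < r j ^ 2 - ‖x - p j‖ ^ 2) :
    (∀ j' : Fin l', y j' ≠ 0) ∧
      Function.Surjective
        (fderiv ℝ
          (fun w : Π j' : Fin l', EuclideanSpace ℝ (Fin (I j' + 1)) =>
            (fun j' : Fin l' => ‖w j'‖ ^ 2 : Fin l' → ℝ)) y) := by
  have hy : ∀ j' : Fin l', y j' ≠ 0 := by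
    intro j'
    have hprod : 0 < ∏ j ∈ Finset.univ.filter (fun j => mlab j = j'),
        (r j ^ 2 - ‖x - p j‖ ^ 2) :=
      Finset.prod_pos (fun j _ => hpos j)
    rw [hM j'] at hprod
    intro h
    rw [h] at hprod
    simp at hprod
  refine ⟨hy, ?_⟩
  -- explicit derivative
  set L : (Π j' : Fin l', EuclideanSpace ℝ (Fin (I j' + 1))) →L[ℝ] (Fin l' → ℝ) :=
    ContinuousLinearMap.pi (fun j' =>
      (2 : ℝ) • ((innerSL ℝ (y j')).comp (ContinuousLinearMap.proj j')))
  have hL : HasFDerivAt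
      (fun w : Π j' : Fin l', EuclideanSpace ℝ (Fin (I j' + 1)) =>
        (fun j' : Fin l' => ‖w j'‖ ^ 2 : Fin l' → ℝ)) L y := by
    rw [hasFDerivAt_pi']
    intro j'
    have := (hasFDerivAt_apply (𝕜 := ℝ) j' y).norm_sq
    refine this.congr_fderiv ?_
    ext v
    simp [L]
  rw [hL.fderiv]
  intro c
  refine ⟨fun j' => ((c j' / (2 * ‖y j'‖ ^ 2)) : ℝ) • y j', ?_⟩
  funext j'
  have hny : ‖y j'‖ ^ 2 ≠ 0 := pow_ne_zero 2 (norm_ne_zero_iff.mpr (hy j'))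
  simp only [L, ContinuousLinearMap.pi_apply, ContinuousLinearMap.smul_apply,
    ContinuousLinearMap.coe_comp', Function.comp_apply, ContinuousLinearMap.proj_apply,
    innerSL_apply_apply, smul_eq_mul]
  rw [real_inner_smul_right, real_inner_self_eq_norm_sq]
  field_simp
  have hn : ‖y j'‖ ≠ 0 := norm_ne_zero_iff.mpr (hy j')
  field_simp
end
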